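/- arXiv:2103.06072 — 2 statements merged into one kernel-verified Lean document; each statement's English description precedes it below -/
import Mathlib

section
/- For a vain set Ω ⊂ ℝⁿ, the negative distance function to the boundary, x ↦ -dist(x, ∂Ω), defined on Ω, is a vain function. Equivalently, dist(x_λ, ∂Ω) ≥ dist(x, ∂Ω) for all x ∈ Ω and λ ∈ [-1,1]. -/
noncomputable section

def scale1E {n : ℕ} (lam : ℝ) (x : EuclideanSpace ℝ (Fin (n+1))) :
    EuclideanSpace ℝ (Fin (n+1)) :=
  WithLp.toLp 2 (Function.update x 0 (lam * x 0))

def VainSetE {n : ℕ} (Ω : Set (EuclideanSpace ℝ (Fin (n+1)))) : Prop :=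
  ∀ x ∈ Ω, ∀ lam ∈ Set.Icc (-1 : ℝ) 1, scale1E lam x ∈ Ω

lemma euclidean_dist_le_of_coords {n : ℕ} (a b c d : EuclideanSpace ℝ (Fin (n+1)))
    (h : ∀ i, |a i - b i| ≤ |c i - d i|) : dist a b ≤ dist c d := by
  rw [EuclideanSpace.dist_eq, EuclideanSpace.dist_eq]
  apply Real.sqrt_le_sqrt
  apply Finset.sum_le_sum
  intro i _
  have := h i
  rw [Real.dist_eq, Real.dist_eq]
  have h1 : (0:ℝ) ≤ |a i - b i| := abs_nonneg _
  nlinarith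

/-- Core construction: any point `z` can be written as `scale1E mu w` with
`w` at least as close to `x` as `z` is to `scale1E lam x`. -/
lemma core {n : ℕ} (x z : EuclideanSpace ℝ (Fin (n+1))) {lam : ℝ}
    (hlam : lam ∈ Set.Icc (-1 : ℝ) 1) :
    ∃ w : EuclideanSpace ℝ (Fin (n+1)), ∃ mu ∈ Set.Icc (-1 : ℝ) 1,
      scale1E mu w = z ∧ dist w x ≤ dist z (scale1E lam x) := by
  obtain ⟨hlam1, hlam2⟩ := hlam
  -- key coordinate-0 bound, used in the far case
  have hkey : |z 0| - |x 0| ≤ |z 0 - lam * x 0| := by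
    have h1 : |z 0| - |lam * x 0| ≤ |z 0 - lam * x 0| := abs_sub_abs_le_abs_sub _ _
    have h2 : |lam * x 0| ≤ |x 0| := by
      rw [abs_mul]
      nlinarith [abs_nonneg (x 0), abs_nonneg lam, abs_le.2 ⟨hlam1, hlam2⟩]
    linarith
  by_cases h : |z 0| ≤ |x 0|
  · -- near case: w agrees with x at coordinate 0
    set mu : ℝ := if x 0 = 0 then 0 else z 0 / x 0 with hmu
    have hmuabs : |mu| ≤ 1 := by
      rw [hmu]
      split_ifs with hx0
      · norm_num
      · rw [abs_div]
        exact div_le_one_of_le₀ h (abs_nonneg _)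
    have hmux : mu * x 0 = z 0 := by
      rw [hmu]
      split_ifs with hx0
      · rw [hx0, mul_zero]
        have : |z 0| ≤ 0 := by rwa [hx0, abs_zero] at h
        have := abs_nonneg (z 0)
        nlinarith [abs_nonneg (z 0), neg_abs_le (z 0), le_abs_self (z 0)]
      · field_simp
    refine ⟨WithLp.toLp 2 (Function.update z 0 (x 0)), mu, abs_le.1 hmuabs, ?_, ?_⟩
    · ext i
      by_cases hi : i = 0
      · subst hi
        simp [scale1E, hmux]
      · simp [scale1E, Function.update_of_ne hi]
    · apply euclidean_dist_le_of_coords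
      intro i
      by_cases hi : i = 0
      · subst hi
        simp [scale1E, abs_nonneg]
      · simp [scale1E, Function.update_of_ne hi]
  · push_neg at h
    set σ : ℝ := if 0 ≤ x 0 * z 0 then (1:ℝ) else -1 with hσ
    have hσ2 : σ * σ = 1 := by
      rw [hσ]; split_ifs <;> norm_num
    have hσabs : |σ| ≤ 1 := by
      rw [hσ]; split_ifs <;> norm_num
    have hclose : |σ * z 0 - x 0| ≤ |z 0| - |x 0| := by
      rw [hσ]
      split_ifs with hsgn <;>
        rcases abs_cases (x 0) with ⟨e1, f1⟩ | ⟨e1, f1⟩ <;>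
        rcases abs_cases (z 0) with ⟨e2, f2⟩ | ⟨e2, f2⟩ <;>
        rcases abs_cases (σ * z 0 - x 0) with ⟨e3, f3⟩ | ⟨e3, f3⟩ <;>
        rw [hσ] at e3 <;> simp only [hsgn, if_true, if_false] at e3 <;>
        first | linarith | nlinarith
    refine ⟨WithLp.toLp 2 (Function.update z 0 (σ * z 0)), σ, abs_le.1 hσabs, ?_, ?_⟩
    · ext i
      by_cases hi : i = 0
      · subst hi
        simp [scale1E, ← mul_assoc, hσ2]
      · simp [scale1E, Function.update_of_ne hi]
    · apply euclidean_dist_le_of_coords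
      intro i
      by_cases hi : i = 0
      · subst hi
        simp only [scale1E, PiLp.toLp_apply, Function.update_self]
        calc |Function.update z 0 (σ * z 0) 0 - x 0| = |σ * z 0 - x 0| := by
              rw [Function.update_self]
          _ ≤ |z 0| - |x 0| := hclose
          _ ≤ |z 0 - lam * x 0| := hkey
      · simp [scale1E, Function.update_of_ne hi]

theorem vain_neg_dist_to_boundary {n : ℕ} (Ω : Set (EuclideanSpace ℝ (Fin (n+1))))
    (hΩ : VainSetE Ω) :
    ∀ x ∈ Ω, ∀ lam ∈ Set.Icc (-1 : ℝ) 1,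
      Metric.infDist x (frontier Ω) ≤ Metric.infDist (scale1E lam x) (frontier Ω) := by
  intro x hx lam hlam
  by_cases hU : Ω = Set.univ
  · subst hU
    simp
  -- boundary point realizing the distance from x to the complement
  obtain ⟨y₀, hy₀F, hy₀d⟩ := exists_mem_frontier_infDist_compl_eq_dist hx hU
  have hle : Metric.infDist x (frontier Ω) ≤ Metric.infDist x Ωᶜ := by
    rw [hy₀d]
    exact Metric.infDist_le_dist_of_mem hy₀F
  refine le_trans hle ?_
  -- now show infDist x Ωᶜ ≤ infDist (scale1E lam x) (frontier Ω)
  have hFne : (frontier Ω).Nonempty := ⟨y₀, hy₀F⟩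
  conv_rhs => rw [Metric.infDist_eq_iInf]
  have : Nonempty (frontier Ω) := hFne.to_subtype
  apply le_ciInf
  intro ⟨y, hy⟩
  -- y ∈ frontier Ω ⊆ closure Ωᶜ
  have hyc : y ∈ closure Ωᶜ := by
    rw [frontier_eq_closure_inter_closure] at hy
    exact hy.2
  -- suffices: for every ε > 0, infDist x Ωᶜ ≤ dist (scale1E lam x) y + ε
  refine le_of_forall_pos_le_add ?_
  intro ε hε
  obtain ⟨z, hzc, hzd⟩ := Metric.mem_closure_iff.1 hyc ε hε
  obtain ⟨w, mu, hmu, hws, hwd⟩ := core x z hlam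
  have hwc : w ∈ Ωᶜ := by
    intro hwΩ
    exact hzc (hws ▸ hΩ w hwΩ mu hmu)
  calc Metric.infDist x Ωᶜ ≤ dist x w := Metric.infDist_le_dist_of_mem hwc
    _ = dist w x := dist_comm _ _
    _ ≤ dist z (scale1E lam x) := hwd
    _ = dist (scale1E lam x) z := dist_comm _ _
    _ ≤ dist (scale1E lam x) y + dist y z := dist_triangle _ _ _
    _ ≤ dist (scale1E lam x) y + ε := by
        have : dist y z = dist z y := dist_comm _ _
        linarith [hzd, this ▸ hzd]
end
end

section
/- There exists a vain function u : ℝ → ℝ and a probability measure μ on ℝ (a symmetric discrete kernel) such that the convolution x ↦ ∫ u(x - y) dμ(y) is not vain. Concretely, for u(x) = √|x| and μ = ½(δ_ε + δ_{-ε}) with ε > 0, the convolution v(x) = ½(√|x-ε| + √|x+ε|) is not vain. -/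
noncomputable section

/-- Vain function on all of `ℝ`: `u (lam * x) ≤ u x` for `lam ∈ [-1,1]`. -/
def Vain1 (u : ℝ → ℝ) : Prop :=
  ∀ x : ℝ, ∀ lam ∈ Set.Icc (-1 : ℝ) 1, u (lam * x) ≤ u x

theorem convolution_of_vain_not_vain (ε : ℝ) (hε : 0 < ε) :
    Vain1 (fun x => Real.sqrt |x|) ∧
      ¬ Vain1 (fun x => (Real.sqrt |x - ε| + Real.sqrt |x + ε|) / 2) := by
  constructor
  · intro x lam hlam
    apply Real.sqrt_le_sqrt
    rw [abs_mul]
    have h1 : |lam| ≤ 1 := abs_le.mpr ⟨hlam.1, hlam.2⟩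
    calc |lam| * |x| ≤ 1 * |x| := by
          exact mul_le_mul_of_nonneg_right h1 (abs_nonneg x)
      _ = |x| := one_mul _
  · intro h
    have := h ε 0 ⟨by norm_num, by norm_num⟩
    simp only [zero_mul, zero_sub, zero_add, abs_neg, sub_self, abs_zero,
      Real.sqrt_zero, zero_add] at this
    rw [abs_of_pos hε, abs_of_pos (by linarith : (0:ℝ) < ε + ε)] at this
    have key : Real.sqrt (ε + ε) / 2 < Real.sqrt ε := by
      rw [div_lt_iff₀ (by norm_num : (0:ℝ) < 2)]
      have : Real.sqrt ε * 2 = Real.sqrt (ε * 4) := by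
        rw [Real.sqrt_mul hε.le]
        rw [show (4:ℝ) = 2^2 by norm_num, Real.sqrt_sq (by norm_num : (0:ℝ) ≤ 2)]
      rw [this]
      exact Real.sqrt_lt_sqrt (by linarith) (by linarith)
    have hle : (Real.sqrt ε + Real.sqrt ε) / 2 ≤ Real.sqrt (ε + ε) / 2 := this
    linarith
end
end
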